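/- Let κ be regular uncountable with κ^{<κ} = κ, let A be a set with |A| ≤ κ, and let ρ : B → S(κ) induce a κ-cofinitary representation with A ∩ B = ∅. Then the forcing notion Q^κ_{A,ρ} is κ-centered: it is the union of κ many subsets, each of which is directed (any two conditions with the same first coordinate are compatible). -/

import Mathlib

open Cardinal

universe u

variable {A B α : Type u}

/-- A letter of a word over the alphabet `A ∪ B`, with a sign
(`true` for the letter itself, `false` for its inverse). -/
abbrev CofLetter (A B : Type u) : Type u := (A ⊕ B) × Bool

/-- The binary relation on `α` determined by a single letter: generators from `A`
are interpreted by the sections of `s ⊆ A × α × α`, generators from `B` by `ρ`. -/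
def letterRel (s : Set (A × α × α)) (ρ : B → Equiv.Perm α) : CofLetter A B → Set (α × α)
  | (Sum.inl a, true) => {p | (a, p.1, p.2) ∈ s}
  | (Sum.inl a, false) => {p | (a, p.2, p.1) ∈ s}
  | (Sum.inr b, true) => {p | ρ b p.1 = p.2}
  | (Sum.inr b, false) => {p | ρ b p.2 = p.1}

/-- Evaluation `e_w[s, ρ]` of a word `w` (a list of letters, the head of the list
being the outermost letter) as a binary relation on `α`. -/
def evalWord (s : Set (A × α × α)) (ρ : B → Equiv.Perm α) :
    List (CofLetter A B) → Set (α × α)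
  | [] => {p | p.1 = p.2}
  | l :: w => {p | ∃ y, (p.1, y) ∈ evalWord s ρ w ∧ (y, p.2) ∈ letterRel s ρ l}

/-- A word is reduced if no letter is immediately followed by its inverse. -/
def ReducedWord (w : List (CofLetter A B)) : Prop :=
  w.Chain' fun l m => ¬(l.1 = m.1 ∧ l.2 = !m.2)

/-- A good word: a nonempty reduced word which is either a power of a single letter
or starts and ends with different letters. -/
def GoodWord (w : List (CofLetter A B)) : Prop :=
  w ≠ [] ∧ ReducedWord w ∧
    ((∃ l, ∀ m ∈ w, m = l) ∨
      (∃ h t, w.head? = some h ∧ w.getLast? = some t ∧ h.1 ≠ t.1))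

/-- `ρ : B → S(α)` induces a `κ`-cofinitary representation: every non-identity
element of the image of its canonical extension to the free group on `B` has
fewer than `κ = #α` fixed points. -/
def InducesCofinitaryRep (ρ : B → Equiv.Perm α) : Prop :=
  ∀ g ∈ (FreeGroup.lift ρ).range, g ≠ 1 → #{x : α | g x = x} < #α

/-- A condition of the forcing `Q^κ_{A,ρ}` for adding a `κ`-maximal cofinitary group. -/
structure QCond (A B α : Type u) (ρ : B → Equiv.Perm α) where
  /-- the finite-approximation part `s` -/
  s : Set (A × α × α)
  /-- the side condition: a small set of good words -/
  F : Set (List (CofLetter A B))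
  s_small : #s < #α
  F_small : #F < #α
  inj : ∀ a : A, ∀ x y x' y' : α, (a, x, y) ∈ s → (a, x', y') ∈ s → (x = x' ↔ y = y')
  good : ∀ w ∈ F, GoodWord w

/-- The extension relation of `Q^κ_{A,ρ}`: `p ≤ q` iff `p` end-extends `q` and no
word of `q.F` gains new fixed points. -/
def QLE (ρ : B → Equiv.Perm α) (p q : QCond A B α ρ) : Prop :=
  q.s ⊆ p.s ∧ q.F ⊆ p.F ∧
    ∀ w ∈ q.F, ∀ x : α, (x, x) ∈ evalWord p.s ρ w → (x, x) ∈ evalWord q.s ρ w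

open Ordinal in
lemma mk_small_subsets_le {α : Type u} (hreg : (#α).IsRegular) (hunc : ℵ₀ < #α)
    (hpow : #α ^< #α = #α) : #{s : Set α // #s < #α} ≤ #α := by
  obtain ⟨r, wo, hr⟩ := Cardinal.ord_eq α
  have h1 : {s : Set α | #s < #α} ⊆ {s : Set α | Set.Bounded r s} := by
    intro s hs
    by_contra hb
    haveI := Classical.decRel r
    letI : LinearOrder α := linearOrderOfSTO r
    haveI : WellFoundedLT α := wo.toIsWellFounded
    have hc : IsCofinal s := by
      intro a
      by_contra h
      push_neg at h
      exact hb ⟨a, fun b hb' => h b hb'⟩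
    have h3 := Order.cof_le hc
    have heq : typeLT α = Ordinal.type r := rfl
    rw [← Ordinal.cof_type, heq, ← hr, hreg.cof_eq] at h3
    exact absurd hs (not_lt.2 h3)
  refine (Cardinal.mk_le_mk_of_subset h1).trans ?_
  have h2 : {s : Set α | Set.Bounded r s} = ⋃ i, 𝒫{j | r j i} := Set.setOf_exists _
  rw [h2]
  refine Cardinal.mk_iUnion_le_sum_mk.trans
    ((Cardinal.sum_le_mk_mul_iSup (fun i => #(𝒫{j | r j i}))).trans
    ((Cardinal.mul_le_max_of_aleph0_le_left hunc.le).trans ?_))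
  rw [max_eq_left]
  apply ciSup_le'
  intro i
  rw [Cardinal.mk_powerset]
  calc (2 : Cardinal) ^ #{j | r j i} ≤ #α ^ #{j | r j i} :=
        Cardinal.power_le_power_right (by exact_mod_cast (Cardinal.nat_lt_aleph0 2).le.trans hunc.le)
    _ ≤ #α ^< #α := by
        apply Cardinal.le_powerlt
        exact Cardinal.card_typein_lt (r := r) i hr
    _ = #α := hpow

/-- If `|A| ≤ κ` then `Q^κ_{A,ρ}` is `κ`-centered. -/
theorem QCond_kappa_centered
    (hreg : (#α).IsRegular) (hunc : ℵ₀ < #α) (hpow : #α ^< #α = #α)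
    (hA : #A ≤ #α)
    (ρ : B → Equiv.Perm α) (hρ : InducesCofinitaryRep ρ) :
    ∃ C : α → Set (QCond A B α ρ),
      (⋃ γ : α, C γ) = Set.univ ∧
      ∀ γ : α, ∀ p ∈ C γ, ∀ q ∈ C γ, ∃ r : QCond A B α ρ, QLE ρ r p ∧ QLE ρ r q := by
  classical
  -- an injective labelling of the possible first coordinates by elements of `α`
  have hX : #(A × α × α) ≤ #α := by
    calc #(A × α × α) = #A * (#α * #α) := by simp [Cardinal.mk_prod]
      _ = #A * #α := by rw [Cardinal.mul_eq_self hunc.le]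
      _ ≤ #α * #α := mul_le_mul_left hA _
      _ = #α := Cardinal.mul_eq_self hunc.le
  obtain ⟨e⟩ := hX
  have key : #{s : Set (A × α × α) // #s < #α} ≤ #α := by
    refine le_trans ?_ (mk_small_subsets_le hreg hunc hpow)
    refine ⟨⟨fun s => ⟨e '' s.1, lt_of_le_of_lt Cardinal.mk_image_le s.2⟩, ?_⟩⟩
    intro s t hst
    exact Subtype.ext ((Set.image_injective.2 e.injective)
      (congrArg Subtype.val hst))
  obtain ⟨f⟩ := key
  refine ⟨fun γ => {p | f ⟨p.s, p.s_small⟩ = γ}, ?_, ?_⟩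
  · ext p
    simp only [Set.mem_iUnion, Set.mem_univ, iff_true]
    exact ⟨f ⟨p.s, p.s_small⟩, rfl⟩
  · intro γ p hp q hq
    have hpq : p.s = q.s := by
      have := f.injective (hp.trans hq.symm)
      exact congrArg Subtype.val this
    refine ⟨⟨p.s, p.F ∪ q.F, p.s_small, ?_, p.inj, ?_⟩, ?_, ?_⟩
    · exact lt_of_le_of_lt (Cardinal.mk_union_le _ _)
        (Cardinal.add_lt_of_lt hunc.le p.F_small q.F_small)
    · intro w hw
      rcases hw with hw | hw
      · exact p.good w hw
      · exact q.good w hw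
    · exact ⟨subset_rfl, Set.subset_union_left, fun w _ x h => h⟩
    · refine ⟨hpq ▸ subset_rfl, Set.subset_union_right, fun w _ x h => ?_⟩
      rw [← hpq]
      exact h
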